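/- Let W be the set of 4×2 complex matrices both of whose columns are nonzero, and let S = ℂ× act on W by scaling the bottom two rows: s ∘ A multiplies rows 3 and 4 of A by s. Let pr : W → Mat₂(ℂ) send A to its top 2×2 block. Then pr is S-invariant, surjective, and any S-invariant continuous map φ : W → Z into a Hausdorff topological space satisfies φ(A) = φ(A') whenever A and A' have the same top 2×2 block (i.e., φ factors through pr as a function). -/

import Mathlib

open Matrix Filter Topology

def Wset : Set (Matrix (Fin 4) (Fin 2) ℂ) :=
  {A | (∃ i, A i 0 ≠ 0) ∧ (∃ i, A i 1 ≠ 0)}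

noncomputable def actS (s : ℂ) (A : Matrix (Fin 4) (Fin 2) ℂ) : Matrix (Fin 4) (Fin 2) ℂ :=
  !![1, 0, 0, 0; 0, 1, 0, 0; 0, 0, s, 0; 0, 0, 0, s] * A

def prMap (A : Matrix (Fin 4) (Fin 2) ℂ) : Matrix (Fin 2) (Fin 2) ℂ :=
  !![A 0 0, A 0 1; A 1 0, A 1 1]

lemma actS_apply (s : ℂ) (A : Matrix (Fin 4) (Fin 2) ℂ) :
    actS s A = Matrix.of (fun (i : Fin 4) (j : Fin 2) => if (i : ℕ) < 2 then A i j else s * A i j) := by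
  ext i j
  fin_cases i <;> simp [actS, Matrix.mul_apply, Fin.sum_univ_four] <;>
    rw [show ((3:Fin 4):ℕ) = 3 from rfl] <;> norm_num

/-- bottom rows zeroed out -/
def topZ (A : Matrix (Fin 4) (Fin 2) ℂ) : Matrix (Fin 4) (Fin 2) ℂ :=
  Matrix.of (fun (i : Fin 4) (j : Fin 2) => if (i : ℕ) < 2 then A i j else 0)

lemma fskew (A : Matrix (Fin 4) (Fin 2) ℂ) (s : ℂ) :
    actS s A = topZ A + s • (A - topZ A) := by
  rw [actS_apply]
  ext i j
  by_cases h : (i : ℕ) ≤ 1 <;> simp [topZ, h] <;> ring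

lemma fskew_cont (A : Matrix (Fin 4) (Fin 2) ℂ) :
    Continuous (fun s : ℂ => topZ A + s • (A - topZ A)) := by fun_prop

/-- Key lemma: if both columns of the top block are nonzero, φ A = φ (topZ A). -/
lemma key {Z : Type*} [TopologicalSpace Z] [T2Space Z]
    (φ : Matrix (Fin 4) (Fin 2) ℂ → Z) (hcont : ContinuousOn φ Wset)
    (hinv : ∀ (s : ℂ), s ≠ 0 → ∀ A ∈ Wset, φ (actS s A) = φ A)
    (A : Matrix (Fin 4) (Fin 2) ℂ)
    (h0 : A 0 0 ≠ 0) (h1 : A 0 1 ≠ 0) :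
    φ A = φ (topZ A) := by
  have hAW : A ∈ Wset := ⟨⟨0, h0⟩, ⟨0, h1⟩⟩
  have htop0 : ∀ j, topZ A 0 j = A 0 j := fun j => by simp [topZ]
  have htW : topZ A ∈ Wset := ⟨⟨0, by rw [htop0]; exact h0⟩, ⟨0, by rw [htop0]; exact h1⟩⟩
  set f : ℂ → Matrix (Fin 4) (Fin 2) ℂ := fun s => topZ A + s • (A - topZ A) with hf
  have hfW : ∀ s, f s ∈ Wset := by
    intro s
    have e0 : f s 0 0 = A 0 0 := by simp [hf, topZ]
    have e1 : f s 0 1 = A 0 1 := by simp [hf, topZ]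
    exact ⟨⟨0, by rw [e0]; exact h0⟩, ⟨0, by rw [e1]; exact h1⟩⟩
  have hf0 : f 0 = topZ A := by simp [hf]
  have htend : Tendsto f (𝓝[≠] (0:ℂ)) (𝓝[Wset] (topZ A)) := by
    rw [tendsto_nhdsWithin_iff]
    constructor
    · have := (fskew_cont A).tendsto 0
      simp only [zero_smul, add_zero] at this
      exact this.mono_left nhdsWithin_le_nhds
    · exact Filter.Eventually.of_forall (fun s => hfW s)
  have hφtend : Tendsto (φ ∘ f) (𝓝[≠] (0:ℂ)) (𝓝 (φ (topZ A))) :=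
    Filter.Tendsto.comp (hcont.continuousWithinAt htW) htend
  have hconst : (φ ∘ f) =ᶠ[𝓝[≠] (0:ℂ)] (fun _ => φ A) := by
    filter_upwards [self_mem_nhdsWithin] with s hs
    have : f s = actS s A := (fskew A s).symm
    simp only [Function.comp_apply, this]
    exact hinv s hs A hAW
  have h2 : Tendsto (φ ∘ f) (𝓝[≠] (0:ℂ)) (𝓝 (φ A)) := by
    rw [tendsto_congr' hconst]
    exact tendsto_const_nhds
  exact tendsto_nhds_unique h2 hφtend

theorem stmt18 {Z : Type*} [TopologicalSpace Z] [T2Space Z]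
    (φ : Matrix (Fin 4) (Fin 2) ℂ → Z) (hcont : ContinuousOn φ Wset)
    (hinv : ∀ (s : ℂ), s ≠ 0 → ∀ A ∈ Wset, φ (actS s A) = φ A) :
    (∀ (s : ℂ), s ≠ 0 → ∀ A ∈ Wset, actS s A ∈ Wset ∧ prMap (actS s A) = prMap A) ∧
    (∀ B : Matrix (Fin 2) (Fin 2) ℂ, ∃ A ∈ Wset, prMap A = B) ∧
    (∀ A ∈ Wset, ∀ A' ∈ Wset, prMap A = prMap A' → φ A = φ A') := by
  refine ⟨?_, ?_, ?_⟩
  · intro s hs A hA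
    obtain ⟨⟨i0, hi0⟩, ⟨i1, hi1⟩⟩ := hA
    constructor
    · constructor
      · refine ⟨i0, ?_⟩
        rw [actS_apply]
        by_cases h : (i0 : ℕ) ≤ 1 <;> simp [h, hi0, hs]
      · refine ⟨i1, ?_⟩
        rw [actS_apply]
        by_cases h : (i1 : ℕ) ≤ 1 <;> simp [h, hi1, hs]
    · rw [actS_apply]
      simp [prMap]
  · intro B
    refine ⟨!![B 0 0, B 0 1; B 1 0, B 1 1; 1, 1; 1, 1], ⟨⟨2, by simp⟩, ⟨2, by simp⟩⟩, ?_⟩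
    ext i j
    fin_cases i <;> fin_cases j <;> simp [prMap]
  · intro A hA A' hA' hpr
    have h00 : A 0 0 = A' 0 0 := by
      have := congrArg (fun M => M 0 0) hpr; simpa [prMap] using this
    have h01 : A 0 1 = A' 0 1 := by
      have := congrArg (fun M => M 0 1) hpr; simpa [prMap] using this
    have h10 : A 1 0 = A' 1 0 := by
      have := congrArg (fun M => M 1 0) hpr; simpa [prMap] using this
    have h11 : A 1 1 = A' 1 1 := by
      have := congrArg (fun M => M 1 1) hpr; simpa [prMap] using this
    -- perturbation matrix: row 0 all ones
    set E : Matrix (Fin 4) (Fin 2) ℂ :=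
      Matrix.of (fun (i : Fin 4) (_ : Fin 2) => if i = 0 then 1 else 0) with hE
    set g : ℂ → Matrix (Fin 4) (Fin 2) ℂ := fun ε => A + ε • E with hg
    set g' : ℂ → Matrix (Fin 4) (Fin 2) ℂ := fun ε => A' + ε • E with hg'
    have hg00 : ∀ ε, g ε 0 0 = A 0 0 + ε := by intro ε; simp [hg, hE]
    have hg01 : ∀ ε, g ε 0 1 = A 0 1 + ε := by intro ε; simp [hg, hE]
    have hg'00 : ∀ ε, g' ε 0 0 = A' 0 0 + ε := by intro ε; simp [hg', hE]
    have hg'01 : ∀ ε, g' ε 0 1 = A' 0 1 + ε := by intro ε; simp [hg', hE]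
    have hev : ∀ c : ℂ, ∀ᶠ ε in 𝓝[≠] (0:ℂ), c + ε ≠ 0 := by
      intro c
      rcases eq_or_ne c 0 with rfl | hc
      · filter_upwards [self_mem_nhdsWithin] with ε hε
        simpa using hε
      · have : Tendsto (fun ε : ℂ => c + ε) (𝓝 0) (𝓝 c) := by
          simpa using (tendsto_const_nhds.add tendsto_id : Tendsto (fun ε : ℂ => c + ε) (𝓝 0) (𝓝 (c + 0)))
        exact (this.eventually_ne hc).filter_mono nhdsWithin_le_nhds
    have htopeq : ∀ ε, topZ (g ε) = topZ (g' ε) := by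
      intro ε
      ext i j
      fin_cases i <;> fin_cases j <;>
        simp [topZ, hg, hg', hE, h00, h01, h10, h11] <;>
        (rw [show ((3:Fin 4):ℕ) = 3 from rfl]; norm_num)
    have hφeq : ∀ᶠ ε in 𝓝[≠] (0:ℂ), φ (g ε) = φ (g' ε) := by
      filter_upwards [hev (A 0 0), hev (A 0 1)] with ε he0 he1
      have k1 := key φ hcont hinv (g ε) (by rw [hg00]; exact he0) (by rw [hg01]; exact he1)
      have k2 := key φ hcont hinv (g' ε) (by rw [hg'00, ← h00]; exact he0)
        (by rw [hg'01, ← h01]; exact he1)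
      rw [k1, k2, htopeq]
    have hgmem : ∀ᶠ ε in 𝓝[≠] (0:ℂ), g ε ∈ Wset := by
      filter_upwards [hev (A 0 0), hev (A 0 1)] with ε he0 he1
      exact ⟨⟨0, by rw [hg00]; exact he0⟩, ⟨0, by rw [hg01]; exact he1⟩⟩
    have hg'mem : ∀ᶠ ε in 𝓝[≠] (0:ℂ), g' ε ∈ Wset := by
      filter_upwards [hev (A 0 0), hev (A 0 1)] with ε he0 he1
      exact ⟨⟨0, by rw [hg'00, ← h00]; exact he0⟩, ⟨0, by rw [hg'01, ← h01]; exact he1⟩⟩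
    have hgc : Continuous g := by fun_prop
    have hg'c : Continuous g' := by fun_prop
    have hg0 : g 0 = A := by simp [hg]
    have hg'0 : g' 0 = A' := by simp [hg']
    have hgt : Tendsto g (𝓝[≠] (0:ℂ)) (𝓝[Wset] A) := by
      rw [tendsto_nhdsWithin_iff]
      refine ⟨?_, hgmem⟩
      have := hgc.tendsto 0
      rw [hg0] at this
      exact this.mono_left nhdsWithin_le_nhds
    have hg't : Tendsto g' (𝓝[≠] (0:ℂ)) (𝓝[Wset] A') := by
      rw [tendsto_nhdsWithin_iff]
      refine ⟨?_, hg'mem⟩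
      have := hg'c.tendsto 0
      rw [hg'0] at this
      exact this.mono_left nhdsWithin_le_nhds
    have t1 : Tendsto (φ ∘ g) (𝓝[≠] (0:ℂ)) (𝓝 (φ A)) :=
      Filter.Tendsto.comp (hcont.continuousWithinAt hA) hgt
    have t2 : Tendsto (φ ∘ g') (𝓝[≠] (0:ℂ)) (𝓝 (φ A')) :=
      Filter.Tendsto.comp (hcont.continuousWithinAt hA') hg't
    exact tendsto_nhds_unique_of_eventuallyEq t1 t2 hφeq
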